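/- Let S be the unilateral shift on H = ℓ²(ℕ, K) and let T ∈ B(H) satisfy TS = ST. Then for the operator Θ := T|_K : K → H (where K is embedded as ker S*), one has T x = ∑_{n≥0} Sⁿ Θ P_K (S*)ⁿ x for every x ∈ H (convergence in norm), i.e., T is the multi-analytic operator M_Θ determined by Θ. -/

import Mathlib

open Filter Topology

/-- An operator `T` on `ℓ²(ℕ, K)` commuting with the unilateral shift `S` is the
multi-analytic operator determined by its restriction to `K ≅ ker S*`:
`T x = ∑ₙ Sⁿ Θ P_K S*ⁿ x`, where `Θ = T|_K`. -/
theorem commutant_of_shift_is_multi_analytic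
    {K : Type*} [NormedAddCommGroup K] [InnerProductSpace ℂ K] [CompleteSpace K]
    (S T : lp (fun _ : ℕ => K) 2 →L[ℂ] lp (fun _ : ℕ => K) 2)
    (hS : ∀ x : lp (fun _ : ℕ => K) 2, (S x) 0 = 0 ∧ ∀ n : ℕ, (S x) (n + 1) = x n)
    (hT : T.comp S = S.comp T)
    (K₀ : Submodule ℂ (lp (fun _ : ℕ => K) 2)) [K₀.HasOrthogonalProjection]
    (hK₀ : ∀ x : lp (fun _ : ℕ => K) 2, x ∈ K₀ ↔ ∀ n : ℕ, n ≠ 0 → x n = 0) :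
    ∀ x : lp (fun _ : ℕ => K) 2,
      Tendsto (fun N : ℕ => ∑ n ∈ Finset.range N,
          (S ^ n) (T ((K₀.orthogonalProjectionOnto
            ((ContinuousLinearMap.adjoint S ^ n) x) : lp (fun _ : ℕ => K) 2))))
        atTop (𝓝 (T x)) := by
  intro x
  -- `S` maps the `k`-th basis copy to the `(k+1)`-st
  have hSsingle : ∀ (k : ℕ) (a : K),
      S (lp.single 2 k a) = lp.single 2 (k + 1) a := by
    intro k a
    apply lp.ext
    funext n
    match n with
    | 0 =>
      rw [(hS (lp.single 2 k a)).1, lp.single_apply_ne (E := fun _ : ℕ => K) 2 (k+1) (a : K) (j := 0) (by omega)]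
    | Nat.succ m =>
      rw [(hS (lp.single 2 k a)).2 m]
      by_cases hm : m = k
      · subst hm
        rw [lp.single_apply_self, lp.single_apply_self]
      · rw [lp.single_apply_ne (E := fun _ : ℕ => K) 2 k (a : K) (j := m) hm,
          lp.single_apply_ne (E := fun _ : ℕ => K) 2 (k+1) (a : K) (j := m+1) (by omega)]
  -- the adjoint of `S` is the left shift
  have hadj : ∀ (y : lp (fun _ : ℕ => K) 2) (k : ℕ),
      (ContinuousLinearMap.adjoint S y) k = y (k + 1) := by
    intro y k
    apply ext_inner_left ℂ
    intro a
    rw [← lp.inner_single_left (𝕜 := ℂ) k a (ContinuousLinearMap.adjoint S y),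
      ← lp.inner_single_left (𝕜 := ℂ) (k + 1) a y,
      ContinuousLinearMap.adjoint_inner_right, hSsingle]
  -- the `0`-th coordinate of `(S*)ⁿ y` is `y n`
  have h0 : ∀ (n : ℕ) (y : lp (fun _ : ℕ => K) 2),
      ((ContinuousLinearMap.adjoint S ^ n) y) 0 = y n := by
    intro n
    induction n with
    | zero => intro y; rfl
    | succ n ih =>
      intro y
      have : (ContinuousLinearMap.adjoint S ^ (n + 1)) y
          = (ContinuousLinearMap.adjoint S ^ n) (ContinuousLinearMap.adjoint S y) := by
        rw [pow_succ, ContinuousLinearMap.mul_apply]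
      rw [this, ih, hadj]
  -- the projection onto `K₀` keeps only the `0`-th coordinate
  have hP : ∀ y : lp (fun _ : ℕ => K) 2,
      (K₀.orthogonalProjectionOnto y : lp (fun _ : ℕ => K) 2) = lp.single 2 0 (y 0) := by
    intro y
    rw [← Submodule.starProjection_apply]
    apply Submodule.eq_starProjection_of_mem_of_inner_eq_zero
    · rw [hK₀]
      intro n hn
      exact lp.single_apply_ne (E := fun _ : ℕ => K) 2 0 (y 0 : K) (j := n) hn
    · intro w hw
      rw [lp.inner_eq_tsum]
      have : (fun i => (inner ℂ (((y - lp.single 2 0 (y 0) : lp (fun _ : ℕ => K) 2) : ∀ n, K) i)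
          ((w : ∀ n, K) i) : ℂ)) = fun _ => 0 := by
        funext i
        by_cases hi : i = 0
        · subst hi
          have h00 : ((y - lp.single 2 0 (y 0) : lp (fun _ : ℕ => K) 2) : ∀ n, K) 0 = 0 := by
            simp [lp.coeFn_sub, lp.single_apply_self]
          rw [h00, inner_zero_left]
        · rw [(hK₀ w).1 hw i hi, inner_zero_right]
      rw [this, tsum_zero]
  -- `Sⁿ` maps the `0`-th basis copy to the `n`-th
  have hSn : ∀ (n : ℕ) (a : K), (S ^ n) (lp.single 2 0 a) = lp.single 2 n a := by
    intro n a
    induction n with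
    | zero => rfl
    | succ n ih =>
      rw [pow_succ', ContinuousLinearMap.mul_apply, ih, hSsingle]
  -- `T` commutes with powers of `S`
  have hcomm : ∀ (n : ℕ) (z : lp (fun _ : ℕ => K) 2),
      (S ^ n) (T z) = T ((S ^ n) z) := by
    intro n
    induction n with
    | zero => intro z; rfl
    | succ n ih =>
      intro z
      have hTS : ∀ w, S (T w) = T (S w) := by
        intro w
        have := congrArg (fun A => A w) hT
        exact this.symm
      rw [pow_succ, ContinuousLinearMap.mul_apply, ContinuousLinearMap.mul_apply,
        hTS, ih]
  -- rewrite the partial sums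
  have key : ∀ N : ℕ, (∑ n ∈ Finset.range N,
      (S ^ n) (T ((K₀.orthogonalProjectionOnto
        ((ContinuousLinearMap.adjoint S ^ n) x) : lp (fun _ : ℕ => K) 2))))
      = T (∑ n ∈ Finset.range N, lp.single 2 n (x n)) := by
    intro N
    rw [map_sum]
    refine Finset.sum_congr rfl fun n _ => ?_
    rw [hP, h0, hcomm, hSn]
  have hsum : Tendsto (fun N : ℕ => ∑ n ∈ Finset.range N, lp.single 2 n (x n))
      atTop (𝓝 x) :=
    (lp.hasSum_single (by norm_num) x).tendsto_sum_nat
  have := ((T.continuous.tendsto x).comp hsum)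
  simpa only [Function.comp_def, key] using this
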